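/- Assume the structure constants are nonnegative. Let z ∈ ℝ_+^n × ℝ_+^ν. If ((1/16) · max_{i,p} max(σ_{ip}, σ_{ip}^4) · max_{(i,p),(j,q)} γ_{ip} γ̃_{jq})^{1/3} · ϖ(z) < 1, then lim_{t→+∞} ϖ(W^t(z)) = 0. -/
import Mathlib


open Filter

/-- The gonosomic evolution operator `W` on `ℝ^n × ℝ^ν` associated with structure constants
`γ_{ipk}` and `γ̃_{ipr}`: it maps `((x_i), (y_p))` to `((x'_k), (y'_r))` with
`x'_k = Σ_{i,p} γ_{ipk} x_i y_p` and `y'_r = Σ_{i,p} γ̃_{ipr} x_i y_p`. -/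
noncomputable def W {n ν : ℕ} (γ : Fin n → Fin ν → Fin n → ℝ)
    (γ' : Fin n → Fin ν → Fin ν → ℝ)
    (z : (Fin n → ℝ) × (Fin ν → ℝ)) : (Fin n → ℝ) × (Fin ν → ℝ) :=
  (fun k => ∑ i, ∑ p, γ i p k * z.1 i * z.2 p,
   fun r => ∑ i, ∑ p, γ' i p r * z.1 i * z.2 p)

/-- The linear form `ϖ(z) = Σ_i x_i + Σ_p y_p` on `ℝ^n × ℝ^ν`. -/
noncomputable def piW {n ν : ℕ} (z : (Fin n → ℝ) × (Fin ν → ℝ)) : ℝ :=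
  ∑ i, z.1 i + ∑ p, z.2 p

/-- `γ_{ip} = Σ_k γ_{ipk}`. -/
noncomputable def gA {n ν : ℕ} (γ : Fin n → Fin ν → Fin n → ℝ)
    (i : Fin n) (p : Fin ν) : ℝ := ∑ k, γ i p k

/-- `γ̃_{ip} = Σ_r γ̃_{ipr}`. -/
noncomputable def gB {n ν : ℕ} (γ' : Fin n → Fin ν → Fin ν → ℝ)
    (i : Fin n) (p : Fin ν) : ℝ := ∑ r, γ' i p r

/-- `σ_{ip} = γ_{ip} + γ̃_{ip}`. -/
noncomputable def σc {n ν : ℕ} (γ : Fin n → Fin ν → Fin n → ℝ)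
    (γ' : Fin n → Fin ν → Fin ν → ℝ) (i : Fin n) (p : Fin ν) : ℝ :=
  gA γ i p + gB γ' i p

/-- The set `O^{n,ν}` of nonnegative points `((x_i),(y_p))` with `x_i y_p = 0` for every
pair `(i,p)` with `σ_{ip} ≠ 0`. -/
def Oset {n ν : ℕ} (γ : Fin n → Fin ν → Fin n → ℝ)
    (γ' : Fin n → Fin ν → Fin ν → ℝ) : Set ((Fin n → ℝ) × (Fin ν → ℝ)) :=
  {z | (∀ i, 0 ≤ z.1 i) ∧ (∀ p, 0 ≤ z.2 p) ∧
    ∀ i p, σc γ γ' i p ≠ 0 → z.1 i * z.2 p = 0}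

/-- The set `S^{n,ν} = S^{n+ν-1} \ O^{n,ν}`, where `S^{n+ν-1}` is the simplex of nonnegative
points with `ϖ(z) = 1`. -/
def Sset {n ν : ℕ} (γ : Fin n → Fin ν → Fin n → ℝ)
    (γ' : Fin n → Fin ν → Fin ν → ℝ) : Set ((Fin n → ℝ) × (Fin ν → ℝ)) :=
  {z | (∀ i, 0 ≤ z.1 i) ∧ (∀ p, 0 ≤ z.2 p) ∧ piW z = 1} \ Oset γ γ'

/-- The normalized gonosomic operator `V(z) = (1/ϖ(W z)) • W z` (junk value when
`ϖ(W z) = 0`, since in `ℝ` we have `0⁻¹ = 0`). -/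
noncomputable def V {n ν : ℕ} (γ : Fin n → Fin ν → Fin n → ℝ)
    (γ' : Fin n → Fin ν → Fin ν → ℝ)
    (z : (Fin n → ℝ) × (Fin ν → ℝ)) : (Fin n → ℝ) × (Fin ν → ℝ) :=
  (piW (W γ γ' z))⁻¹ • W γ γ' z

section auxx
variable {n ν : ℕ} (γ : Fin n → Fin ν → Fin n → ℝ) (γ' : Fin n → Fin ν → Fin ν → ℝ)

lemma sumA (w : (Fin n → ℝ) × (Fin ν → ℝ)) :
    ∑ k, (W γ γ' w).1 k = ∑ i, ∑ p, gA γ i p * (w.1 i * w.2 p) := by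
  simp only [W, gA, Finset.sum_mul, mul_assoc]
  rw [Finset.sum_comm]
  exact Finset.sum_congr rfl fun i _ => Finset.sum_comm

lemma sumB (w : (Fin n → ℝ) × (Fin ν → ℝ)) :
    ∑ r, (W γ γ' w).2 r = ∑ i, ∑ p, gB γ' i p * (w.1 i * w.2 p) := by
  simp only [W, gB, Finset.sum_mul, mul_assoc]
  rw [Finset.sum_comm]
  exact Finset.sum_congr rfl fun i _ => Finset.sum_comm

lemma piW_W (w : (Fin n → ℝ) × (Fin ν → ℝ)) :
    piW (W γ γ' w) = ∑ i, ∑ p, σc γ γ' i p * (w.1 i * w.2 p) := by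
  have h1 := sumA γ γ' w
  have h2 := sumB γ γ' w
  simp only [piW] at *
  rw [h1, h2, ← Finset.sum_add_distrib]
  refine Finset.sum_congr rfl fun i _ => ?_
  rw [← Finset.sum_add_distrib]
  exact Finset.sum_congr rfl fun p _ => by simp [σc, add_mul]

lemma W_nonneg (hγ : ∀ i p k, 0 ≤ γ i p k) (hγ' : ∀ i p r, 0 ≤ γ' i p r)
    (w : (Fin n → ℝ) × (Fin ν → ℝ)) (h1 : ∀ i, 0 ≤ w.1 i) (h2 : ∀ p, 0 ≤ w.2 p) :
    (∀ k, 0 ≤ (W γ γ' w).1 k) ∧ (∀ r, 0 ≤ (W γ γ' w).2 r) := by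
  constructor <;> intro k <;> simp only [W] <;>
    exact Finset.sum_nonneg fun i _ => Finset.sum_nonneg fun p _ =>
      mul_nonneg (mul_nonneg (by first | exact hγ i p k | exact hγ' i p k) (h1 i)) (h2 p)

lemma key0 {M₃ : ℝ} (hσ : ∀ i p, σc γ γ' i p ≤ M₃)
    (w : (Fin n → ℝ) × (Fin ν → ℝ)) (h1 : ∀ i, 0 ≤ w.1 i) (h2 : ∀ p, 0 ≤ w.2 p) :
    piW (W γ γ' w) ≤ M₃ * ((∑ i, w.1 i) * (∑ p, w.2 p)) := by
  rw [piW_W, Finset.sum_mul_sum, Finset.mul_sum]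
  refine Finset.sum_le_sum fun i _ => ?_
  rw [Finset.mul_sum]
  exact Finset.sum_le_sum fun p _ =>
    mul_le_mul_of_nonneg_right (hσ i p) (mul_nonneg (h1 i) (h2 p))

lemma amgm {a b : ℝ} (_ : 0 ≤ a) (_ : 0 ≤ b) : a * b ≤ (a + b) ^ 2 / 4 := by
  nlinarith [sq_nonneg (a - b)]

end auxx

section auxx2
variable {n ν : ℕ} (γ : Fin n → Fin ν → Fin n → ℝ) (γ' : Fin n → Fin ν → Fin ν → ℝ)

lemma step1 {M₃ : ℝ} (hσ : ∀ i p, σc γ γ' i p ≤ M₃) (hM₃0 : 0 ≤ M₃)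
    (w : (Fin n → ℝ) × (Fin ν → ℝ)) (h1 : ∀ i, 0 ≤ w.1 i) (h2 : ∀ p, 0 ≤ w.2 p) :
    piW (W γ γ' w) ≤ M₃ / 4 * piW w ^ 2 := by
  calc piW (W γ γ' w) ≤ M₃ * ((∑ i, w.1 i) * (∑ p, w.2 p)) := key0 γ γ' hσ w h1 h2
    _ ≤ M₃ * (((∑ i, w.1 i) + (∑ p, w.2 p)) ^ 2 / 4) :=
      mul_le_mul_of_nonneg_left
        (amgm (Finset.sum_nonneg fun i _ => h1 i) (Finset.sum_nonneg fun p _ => h2 p)) hM₃0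
    _ = M₃ / 4 * piW w ^ 2 := by rw [piW]; ring

lemma step2 {M₃ M₂ : ℝ} (hγ : ∀ i p k, 0 ≤ γ i p k) (hγ' : ∀ i p r, 0 ≤ γ' i p r)
    (hσ : ∀ i p, σc γ γ' i p ≤ M₃) (hM₃0 : 0 ≤ M₃)
    (hγle : ∀ i p j q, gA γ i p * gB γ' j q ≤ M₂) (hM₂0 : 0 ≤ M₂)
    (w : (Fin n → ℝ) × (Fin ν → ℝ)) (h1 : ∀ i, 0 ≤ w.1 i) (h2 : ∀ p, 0 ≤ w.2 p) :
    piW (W γ γ' (W γ γ' w)) ≤ M₃ * M₂ / 16 * piW w ^ 4 := by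
  obtain ⟨hw1, hw2⟩ := W_nonneg γ γ' hγ hγ' w h1 h2
  have h0 := key0 γ γ' hσ (W γ γ' w) hw1 hw2
  rw [sumA, sumB] at h0
  have hA : (∑ i, ∑ p, gA γ i p * (w.1 i * w.2 p))
      = ∑ ip : Fin n × Fin ν, gA γ ip.1 ip.2 * (w.1 ip.1 * w.2 ip.2) :=
    (Fintype.sum_prod_type fun ip : Fin n × Fin ν => gA γ ip.1 ip.2 * (w.1 ip.1 * w.2 ip.2)).symm
  have hB : (∑ i, ∑ p, gB γ' i p * (w.1 i * w.2 p))
      = ∑ ip : Fin n × Fin ν, gB γ' ip.1 ip.2 * (w.1 ip.1 * w.2 ip.2) :=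
    (Fintype.sum_prod_type fun ip : Fin n × Fin ν => gB γ' ip.1 ip.2 * (w.1 ip.1 * w.2 ip.2)).symm
  rw [hA, hB] at h0
  set T : ℝ := ∑ ip : Fin n × Fin ν, w.1 ip.1 * w.2 ip.2 with hTdef
  have hT0 : 0 ≤ T := Finset.sum_nonneg fun ip _ => mul_nonneg (h1 ip.1) (h2 ip.2)
  have hTle : T ≤ piW w ^ 2 / 4 := by
    have : T = (∑ i, w.1 i) * (∑ p, w.2 p) := by
      rw [hTdef, Finset.sum_mul_sum, Fintype.sum_prod_type]
    rw [this, piW]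
    exact amgm (Finset.sum_nonneg fun i _ => h1 i) (Finset.sum_nonneg fun p _ => h2 p)
  have hprod : (∑ ip : Fin n × Fin ν, gA γ ip.1 ip.2 * (w.1 ip.1 * w.2 ip.2))
      * (∑ ip : Fin n × Fin ν, gB γ' ip.1 ip.2 * (w.1 ip.1 * w.2 ip.2)) ≤ M₂ * (T * T) := by
    rw [hTdef, Finset.sum_mul_sum, Finset.sum_mul_sum, Finset.mul_sum]
    refine Finset.sum_le_sum fun ip _ => ?_
    rw [Finset.mul_sum]
    refine Finset.sum_le_sum fun jq _ => ?_
    have ha : 0 ≤ w.1 ip.1 * w.2 ip.2 := mul_nonneg (h1 ip.1) (h2 ip.2)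
    have hb : 0 ≤ w.1 jq.1 * w.2 jq.2 := mul_nonneg (h1 jq.1) (h2 jq.2)
    nlinarith [hγle ip.1 ip.2 jq.1 jq.2, mul_nonneg ha hb]
  calc piW (W γ γ' (W γ γ' w)) ≤ _ := h0
    _ ≤ M₃ * (M₂ * (T * T)) := mul_le_mul_of_nonneg_left hprod hM₃0
    _ ≤ M₃ * (M₂ * ((piW w ^ 2 / 4) * (piW w ^ 2 / 4))) := by gcongr
    _ = M₃ * M₂ / 16 * piW w ^ 4 := by ring

end auxx2


/-- Suppose the structure constants are nonnegative and let `z` be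
nonnegative.  If
`((1/16) · max_{i,p} max(σ_{ip}, σ_{ip}⁴) · max_{(i,p),(j,q)} γ_{ip} γ̃_{jq})^(1/3) · ϖ(z) < 1`,
then `ϖ(W^t z) → 0` as `t → +∞`. -/
theorem stmt_13 {n ν : ℕ} (hn : 1 ≤ n) (hν : 1 ≤ ν)
    (γ : Fin n → Fin ν → Fin n → ℝ) (γ' : Fin n → Fin ν → Fin ν → ℝ)
    (hγ : ∀ i p k, 0 ≤ γ i p k) (hγ' : ∀ i p r, 0 ≤ γ' i p r)
    (M₃ : ℝ) (hM₃ : IsGreatest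
      (Set.range fun ip : Fin n × Fin ν =>
        max (σc γ γ' ip.1 ip.2) (σc γ γ' ip.1 ip.2 ^ 4)) M₃)
    (M₂ : ℝ) (hM₂ : IsGreatest
      (Set.range fun x : (Fin n × Fin ν) × (Fin n × Fin ν) =>
        gA γ x.1.1 x.1.2 * gB γ' x.2.1 x.2.2) M₂)
    (z : (Fin n → ℝ) × (Fin ν → ℝ)) (hz1 : ∀ i, 0 ≤ z.1 i) (hz2 : ∀ p, 0 ≤ z.2 p)
    (h : ((1 / 16) * M₃ * M₂) ^ ((1 : ℝ) / 3) * piW z < 1) :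
    Filter.Tendsto (fun t : ℕ => piW ((W γ γ')^[t] z)) Filter.atTop (nhds 0) := by
  have hgA0 : ∀ i p, 0 ≤ gA γ i p := fun i p => Finset.sum_nonneg fun k _ => hγ i p k
  have hgB0 : ∀ i p, 0 ≤ gB γ' i p := fun i p => Finset.sum_nonneg fun r _ => hγ' i p r
  have hσ0 : ∀ i p, 0 ≤ σc γ γ' i p := fun i p => add_nonneg (hgA0 i p) (hgB0 i p)
  have hσle : ∀ i p, σc γ γ' i p ≤ M₃ := fun i p =>
    le_trans (le_max_left _ _) (hM₃.2 ⟨(i, p), rfl⟩)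
  have hγle : ∀ i p j q, gA γ i p * gB γ' j q ≤ M₂ := fun i p j q =>
    hM₂.2 ⟨((i, p), (j, q)), rfl⟩
  set i₀ : Fin n := ⟨0, hn⟩
  set p₀ : Fin ν := ⟨0, hν⟩
  have hM₃0 : 0 ≤ M₃ := le_trans (hσ0 i₀ p₀) (hσle i₀ p₀)
  have hM₂0 : 0 ≤ M₂ :=
    le_trans (mul_nonneg (hgA0 i₀ p₀) (hgB0 i₀ p₀)) (hγle i₀ p₀ i₀ p₀)
  set a := ((1 / 16 : ℝ) * M₃ * M₂) ^ ((1 : ℝ) / 3) with hadef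
  have hx0 : (0 : ℝ) ≤ 1 / 16 * M₃ * M₂ := by positivity
  have ha0 : 0 ≤ a := Real.rpow_nonneg hx0 _
  have ha3 : a ^ 3 = 1 / 16 * M₃ * M₂ := by
    rw [hadef, ← Real.rpow_natCast (((1 / 16 : ℝ) * M₃ * M₂) ^ ((1 : ℝ) / 3)) 3,
      ← Real.rpow_mul hx0]
    norm_num
  have hpz0 : 0 ≤ piW z :=
    add_nonneg (Finset.sum_nonneg fun i _ => hz1 i) (Finset.sum_nonneg fun p _ => hz2 p)
  set u := a * piW z with hudef
  have hu0 : 0 ≤ u := mul_nonneg ha0 hpz0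
  have hu1 : u < 1 := h
  have hit : ∀ t, (∀ i, 0 ≤ ((W γ γ')^[t] z).1 i) ∧ (∀ p, 0 ≤ ((W γ γ')^[t] z).2 p) := by
    intro t
    induction t with
    | zero => exact ⟨hz1, hz2⟩
    | succ t ih =>
      rw [Function.iterate_succ_apply']
      exact W_nonneg γ γ' hγ hγ' _ ih.1 ih.2
  have hP0 : ∀ t, 0 ≤ piW ((W γ γ')^[t] z) := fun t =>
    add_nonneg (Finset.sum_nonneg fun i _ => (hit t).1 i)
      (Finset.sum_nonneg fun p _ => (hit t).2 p)
  have heven : ∀ s, piW ((W γ γ')^[2 * s] z) ≤ piW z * u ^ s := by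
    intro s
    induction s with
    | zero => simp [piW]
    | succ s ih =>
      have h2 : (W γ γ')^[2 * (s + 1)] z = W γ γ' (W γ γ' ((W γ γ')^[2 * s] z)) := by
        rw [show 2 * (s + 1) = (2 * s) + 1 + 1 by ring, Function.iterate_succ_apply',
          Function.iterate_succ_apply']
      rw [h2]
      have hs2 := step2 γ γ' hγ hγ' hσle hM₃0 hγle hM₂0 _ (hit (2 * s)).1 (hit (2 * s)).2
      have hb : M₃ * M₂ / 16 * piW ((W γ γ')^[2 * s] z) ^ 4
          ≤ M₃ * M₂ / 16 * (piW z * u ^ s) ^ 4 := by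
        have h4 : 0 ≤ M₃ * M₂ / 16 := by positivity
        exact mul_le_mul_of_nonneg_left
          (pow_le_pow_left₀ (hP0 (2 * s)) ih 4) h4
      have heq : M₃ * M₂ / 16 * (piW z * u ^ s) ^ 4 = piW z * u ^ (4 * s + 3) := by
        have h16 : M₃ * M₂ / 16 = a ^ 3 := by rw [ha3]; ring
        rw [h16, hudef]; ring
      have hle : piW z * u ^ (4 * s + 3) ≤ piW z * u ^ (s + 1) :=
        mul_le_mul_of_nonneg_left (pow_le_pow_of_le_one hu0 hu1.le (by omega)) hpz0
      linarith
  have hodd : ∀ s, piW ((W γ γ')^[2 * s + 1] z) ≤ (M₃ / 4 * piW z ^ 2) * u ^ s := by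
    intro s
    rw [Function.iterate_succ_apply']
    have hs1 := step1 γ γ' hσle hM₃0 _ (hit (2 * s)).1 (hit (2 * s)).2
    have hb : M₃ / 4 * piW ((W γ γ')^[2 * s] z) ^ 2 ≤ M₃ / 4 * (piW z * u ^ s) ^ 2 := by
      have h4 : 0 ≤ M₃ / 4 := by positivity
      exact mul_le_mul_of_nonneg_left (pow_le_pow_left₀ (hP0 (2 * s)) (heven s) 2) h4
    have heq : M₃ / 4 * (piW z * u ^ s) ^ 2 = (M₃ / 4 * piW z ^ 2) * u ^ (2 * s) := by ring
    have hle : (M₃ / 4 * piW z ^ 2) * u ^ (2 * s) ≤ (M₃ / 4 * piW z ^ 2) * u ^ s :=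
      mul_le_mul_of_nonneg_left (pow_le_pow_of_le_one hu0 hu1.le (by omega)) (by positivity)
    linarith
  set C := max (piW z) (M₃ / 4 * piW z ^ 2) with hCdef
  have hbound : ∀ t, piW ((W γ γ')^[t] z) ≤ C * u ^ (t / 2) := by
    intro t
    obtain ⟨s, hs | hs⟩ := Nat.even_or_odd' t
    · subst hs
      have ht2 : 2 * s / 2 = s := by omega
      rw [ht2]
      exact le_trans (heven s)
        (mul_le_mul_of_nonneg_right (le_max_left _ _) (pow_nonneg hu0 s))
    · subst hs
      have ht2 : (2 * s + 1) / 2 = s := by omega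
      rw [ht2]
      exact le_trans (hodd s)
        (mul_le_mul_of_nonneg_right (le_max_right _ _) (pow_nonneg hu0 s))
  have hdiv : Tendsto (fun t : ℕ => t / 2) atTop atTop :=
    tendsto_atTop_atTop.mpr fun b => ⟨2 * b, fun a ha => by omega⟩
  have hgeo : Tendsto (fun s : ℕ => C * u ^ s) atTop (nhds 0) := by
    have := (tendsto_pow_atTop_nhds_zero_of_lt_one hu0 hu1).const_mul C
    simpa using this
  exact squeeze_zero hP0 hbound (hgeo.comp hdiv)
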